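/- For n ≥ 2, 1 ≤ s ≤ n, and 0 ≤ r ≤ n-1, the recurrence B^+(n,-s,r) = Σ_{j=1}^{n-1} B^+(n-1,j,r-1) + Σ_{j=s}^{n-1} B^+(n-1,-j,r-1) + Σ_{j=1}^{s-1} B^+(n-1,-j,r) holds. -/

import Mathlib

open Finset Polynomial

/-- A signed permutation in the hyperoctahedral group `B_n`: a bijection of
`{±1,…,±n}` with `σ(-i) = -σ(i)`, encoded by its values on `1,…,n`
(extended by `0` elsewhere). -/
structure SignedPerm (n : ℕ) where
  toFun : ℕ → ℤ
  mem_abs : ∀ i ∈ Finset.Icc 1 n, (toFun i).natAbs ∈ Finset.Icc 1 n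
  inj_abs : ∀ i ∈ Finset.Icc 1 n, ∀ j ∈ Finset.Icc 1 n,
      (toFun i).natAbs = (toFun j).natAbs → i = j
  eq_zero : ∀ i, i ∉ Finset.Icc 1 n → toFun i = 0

/-- The extended word `σ_0 σ_1 ⋯ σ_n σ_{n+1}` with `σ_0 = 0` and
`σ_{n+1} = -∞` (modeled by `-(n+1)`, which is smaller than every entry). -/
def word {n : ℕ} (σ : SignedPerm n) (i : ℕ) : ℤ :=
  if i ≤ n then σ.toFun i else -(n + 1 : ℤ)

/-- The number of type-B descents: `|{i ∈ [0,n-1] : σ_i > σ_{i+1}}|`, `σ_0 = 0`. -/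
def desB {n : ℕ} (σ : SignedPerm n) : ℕ :=
  ((Finset.range n).filter (fun i => word σ (i + 1) < word σ i)).card

/-- `a` is the starting position of a slide of `σ`, i.e. of a maximal
decreasing run of length at least 2 in the extended word. -/
def IsSlideStart {n : ℕ} (σ : SignedPerm n) (a : ℕ) : Prop :=
  a ≤ n ∧ (a = 0 ∨ word σ (a - 1) < word σ a) ∧ word σ (a + 1) < word σ a

/-- The number of slides of `σ` (maximal decreasing runs of length ≥ 2 in the
extended word), counted via their starting positions. -/
def slides {n : ℕ} (σ : SignedPerm n) : ℕ :=
  ((Finset.range (n + 1)).filter (fun a =>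
      (a = 0 ∨ word σ (a - 1) < word σ a) ∧ word σ (a + 1) < word σ a)).card

/-- `B^+(n,j,r)`: the number of `σ ∈ B_n` with `σ_n > 0`, `σ_1 = j` and
exactly `r` type-B descents (`j`, `r` integers; the count is `0` for `r < 0`). -/
noncomputable def BP (n : ℕ) (j r : ℤ) : ℕ :=
  Nat.card {σ : SignedPerm n // 0 < σ.toFun n ∧ σ.toFun 1 = j ∧ (desB σ : ℤ) = r}

/-- `B^{++}(n,k)`: number of `σ ∈ B_n` with `σ_1 > 0`, `σ_n > 0`, `k` descents. -/
noncomputable def BPP (n k : ℕ) : ℕ :=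
  Nat.card {σ : SignedPerm n // 0 < σ.toFun 1 ∧ 0 < σ.toFun n ∧ desB σ = k}

/-- `B^{-+}(n,k)`: number of `σ ∈ B_n` with `σ_1 < 0`, `σ_n > 0`, `k` descents. -/
noncomputable def BMP (n k : ℕ) : ℕ :=
  Nat.card {σ : SignedPerm n // σ.toFun 1 < 0 ∧ 0 < σ.toFun n ∧ desB σ = k}

/-- `b^{++}(n,k,s)`: number of `σ ∈ B_n` with `σ_1 > 0`, `σ_n > 0`,
`k` descents and `s+1` slides. -/
noncomputable def bPP (n k s : ℕ) : ℕ :=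
  Nat.card {σ : SignedPerm n //
    0 < σ.toFun 1 ∧ 0 < σ.toFun n ∧ desB σ = k ∧ slides σ = s + 1}

/-- `b^{-+}(n,k,s)`: number of `σ ∈ B_n` with `σ_1 < 0`, `σ_n > 0`,
`k` descents and `s+1` slides. -/
noncomputable def bMP (n k s : ℕ) : ℕ :=
  Nat.card {σ : SignedPerm n //
    σ.toFun 1 < 0 ∧ 0 < σ.toFun n ∧ desB σ = k ∧ slides σ = s + 1}

/-- Number of `σ ∈ B_n` with `σ_n > 0` and `k` descents. -/
noncomputable def BplusCount (n k : ℕ) : ℕ :=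
  Nat.card {σ : SignedPerm n // 0 < σ.toFun n ∧ desB σ = k}

/-- Number of `σ ∈ B_n` with `k` descents. -/
noncomputable def Ball (n k : ℕ) : ℕ := Nat.card {σ : SignedPerm n // desB σ = k}

/-- The `j`-Eulerian polynomial of type `B^+`: `B^+_{n,j}(t) = Σ_r B^+(n,j,r) t^r`. -/
noncomputable def BPpoly (n : ℕ) (j : ℤ) : Polynomial ℤ :=
  ∑ r ∈ Finset.range (n + 1), Polynomial.C (BP n j (r : ℤ) : ℤ) * Polynomial.X ^ r

/-- The type-B Eulerian polynomial `B_n(t) = Σ_{σ ∈ B_n} t^{des_B σ}`. -/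
noncomputable def Bfullpoly (n : ℕ) : Polynomial ℤ :=
  ∑ k ∈ Finset.range (n + 1), Polynomial.C (Ball n k : ℤ) * Polynomial.X ^ k

/-- The symmetrized `j`-Eulerian polynomial `𝔹^+_{n,j}(t)`. -/
noncomputable def BsymPoly (n j : ℕ) : Polynomial ℤ :=
  if 2 * j = n + 1 then BPpoly n (j : ℤ)
  else BPpoly n (j : ℤ) + BPpoly n ((n : ℤ) + 1 - j)


/-! ### auxiliary -/

lemma SignedPerm.ext' {n : ℕ} {σ τ : SignedPerm n} (h : ∀ i, σ.toFun i = τ.toFun i) :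
    σ = τ := by
  cases σ; cases τ; simp only [SignedPerm.mk.injEq]; exact funext h

instance (n : ℕ) : Finite (SignedPerm n) := by
  have key : ∀ σ : SignedPerm n, ∀ i : (Finset.Icc 1 n : Finset ℕ),
      σ.toFun i ∈ Finset.Icc (-(n:ℤ)) (n:ℤ) := by
    intro σ i
    have h := σ.mem_abs i i.2
    simp only [Finset.mem_Icc] at h ⊢
    omega
  apply Finite.of_injective
    (fun σ : SignedPerm n =>
      (fun i : (Finset.Icc 1 n : Finset ℕ) =>
        (⟨σ.toFun i, key σ i⟩ : (Finset.Icc (-(n:ℤ)) (n:ℤ) : Finset ℤ))))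
  intro σ τ h
  apply SignedPerm.ext'
  intro i
  by_cases hi : i ∈ Finset.Icc 1 n
  · exact congrArg Subtype.val (congrFun h ⟨i, hi⟩)
  · rw [σ.eq_zero i hi, τ.eq_zero i hi]

/-- relabel up: insert a gap at `±s`. -/
def urel (s : ℕ) (v : ℤ) : ℤ :=
  if (s:ℤ) ≤ v then v + 1 else if v ≤ -(s:ℤ) then v - 1 else v

/-- relabel down: remove `±s`. -/
def rel (s : ℕ) (v : ℤ) : ℤ :=
  if (s:ℤ) < v then v - 1 else if v < -(s:ℤ) then v + 1 else v

lemma urel_natAbs (s : ℕ) (hs : 1 ≤ s) (v : ℤ) :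
    (urel s v).natAbs = if s ≤ v.natAbs then v.natAbs + 1 else v.natAbs := by
  unfold urel; split_ifs <;> omega

lemma rel_natAbs (s : ℕ) (v : ℤ) :
    (rel s v).natAbs = if s < v.natAbs then v.natAbs - 1 else v.natAbs := by
  unfold rel; split_ifs <;> omega

lemma rel_urel (s : ℕ) (v : ℤ) : rel s (urel s v) = v := by
  unfold rel urel; split_ifs <;> omega

lemma urel_rel (s : ℕ) (hs : 1 ≤ s) (v : ℤ) (h : v.natAbs ≠ s) : urel s (rel s v) = v := by
  unfold rel urel; split_ifs <;> omega

lemma urel_lt_urel (s : ℕ) (v w : ℤ) : urel s v < urel s w ↔ v < w := by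
  unfold urel; split_ifs <;> omega

lemma urel_pos (s : ℕ) (hs : 1 ≤ s) (v : ℤ) : 0 < urel s v ↔ 0 < v := by
  unfold urel; split_ifs <;> omega

lemma urel_lt_neg (s : ℕ) (hs : 1 ≤ s) (v : ℤ) :
    urel s v < -(s:ℤ) ↔ v ≤ -(s:ℤ) := by
  unfold urel; split_ifs <;> omega

/-! ### insertion and deletion -/

/-- Insert `-s` at the front of `τ`, relabeling values to make room for `±s`. -/
def ins (m s : ℕ) (h1 : 1 ≤ s) (h2 : s ≤ m + 1) (τ : SignedPerm m) :
    SignedPerm (m + 1) where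
  toFun i := if i = 1 then -(s:ℤ) else
    if 2 ≤ i ∧ i ≤ m + 1 then urel s (τ.toFun (i - 1)) else 0
  mem_abs := by
    intro i hi
    simp only [Finset.mem_Icc] at hi ⊢
    split_ifs with e1 e2
    · omega
    · have hm := τ.mem_abs (i-1) (by simp only [Finset.mem_Icc]; omega)
      simp only [Finset.mem_Icc] at hm
      rw [urel_natAbs s h1]
      split_ifs <;> omega
    · omega
  inj_abs := by
    intro i hi j hj h
    simp only [Finset.mem_Icc] at hi hj
    beta_reduce at h
    by_cases e1 : i = 1 <;> by_cases e2 : j = 1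
    · omega
    · exfalso
      rw [if_pos e1, if_neg e2, if_pos (by omega : 2 ≤ j ∧ j ≤ m + 1)] at h
      have hm := τ.mem_abs (j-1) (by simp only [Finset.mem_Icc]; omega)
      simp only [Finset.mem_Icc] at hm
      rw [urel_natAbs s h1] at h
      split_ifs at h <;> omega
    · exfalso
      rw [if_neg e1, if_pos e2, if_pos (by omega : 2 ≤ i ∧ i ≤ m + 1)] at h
      have hm := τ.mem_abs (i-1) (by simp only [Finset.mem_Icc]; omega)
      simp only [Finset.mem_Icc] at hm
      rw [urel_natAbs s h1] at h
      split_ifs at h <;> omega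
    · rw [if_neg e1, if_neg e2, if_pos (by omega : 2 ≤ i ∧ i ≤ m + 1),
        if_pos (by omega : 2 ≤ j ∧ j ≤ m + 1)] at h
      have hmi := τ.mem_abs (i-1) (by simp only [Finset.mem_Icc]; omega)
      have hmj := τ.mem_abs (j-1) (by simp only [Finset.mem_Icc]; omega)
      simp only [Finset.mem_Icc] at hmi hmj
      rw [urel_natAbs s h1, urel_natAbs s h1] at h
      have : (τ.toFun (i-1)).natAbs = (τ.toFun (j-1)).natAbs := by
        split_ifs at h <;> omega
      have := τ.inj_abs (i-1) (by simp only [Finset.mem_Icc]; omega)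
        (j-1) (by simp only [Finset.mem_Icc]; omega) this
      omega
  eq_zero := by
    intro i hi
    simp only [Finset.mem_Icc, not_and, not_le] at hi
    beta_reduce
    split_ifs <;> omega

/-- Delete the first entry of `σ`, relabeling to close the gap. -/
def del (m : ℕ) (σ : SignedPerm (m + 1)) : SignedPerm m where
  toFun i := if 1 ≤ i ∧ i ≤ m then rel (σ.toFun 1).natAbs (σ.toFun (i + 1)) else 0
  mem_abs := by
    intro i hi
    simp only [Finset.mem_Icc] at hi ⊢
    rw [if_pos hi]
    have hm1 := σ.mem_abs 1 (by simp only [Finset.mem_Icc]; omega)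
    have hm2 := σ.mem_abs (i+1) (by simp only [Finset.mem_Icc]; omega)
    simp only [Finset.mem_Icc] at hm1 hm2
    have hne : (σ.toFun (i+1)).natAbs ≠ (σ.toFun 1).natAbs := by
      intro hc
      have := σ.inj_abs (i+1) (by simp only [Finset.mem_Icc]; omega)
        1 (by simp only [Finset.mem_Icc]; omega) hc
      omega
    rw [rel_natAbs]
    split_ifs <;> omega
  inj_abs := by
    intro i hi j hj h
    simp only [Finset.mem_Icc] at hi hj
    beta_reduce at h
    rw [if_pos hi, if_pos hj] at h
    have hm1 := σ.mem_abs 1 (by simp only [Finset.mem_Icc]; omega)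
    have hmi := σ.mem_abs (i+1) (by simp only [Finset.mem_Icc]; omega)
    have hmj := σ.mem_abs (j+1) (by simp only [Finset.mem_Icc]; omega)
    simp only [Finset.mem_Icc] at hm1 hmi hmj
    have hnei : (σ.toFun (i+1)).natAbs ≠ (σ.toFun 1).natAbs := by
      intro hc
      have := σ.inj_abs (i+1) (by simp only [Finset.mem_Icc]; omega)
        1 (by simp only [Finset.mem_Icc]; omega) hc
      omega
    have hnej : (σ.toFun (j+1)).natAbs ≠ (σ.toFun 1).natAbs := by
      intro hc
      have := σ.inj_abs (j+1) (by simp only [Finset.mem_Icc]; omega)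
        1 (by simp only [Finset.mem_Icc]; omega) hc
      omega
    rw [rel_natAbs, rel_natAbs] at h
    have : (σ.toFun (i+1)).natAbs = (σ.toFun (j+1)).natAbs := by
      split_ifs at h <;> omega
    have := σ.inj_abs (i+1) (by simp only [Finset.mem_Icc]; omega)
      (j+1) (by simp only [Finset.mem_Icc]; omega) this
    omega
  eq_zero := by
    intro i hi
    beta_reduce
    rw [if_neg (by simpa [Finset.mem_Icc] using hi)]

lemma ins_toFun (m s : ℕ) (h1 : 1 ≤ s) (h2 : s ≤ m + 1) (τ : SignedPerm m) (i : ℕ) :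
    (ins m s h1 h2 τ).toFun i = if i = 1 then -(s:ℤ) else
      if 2 ≤ i ∧ i ≤ m + 1 then urel s (τ.toFun (i - 1)) else 0 := rfl

lemma del_toFun (m : ℕ) (σ : SignedPerm (m + 1)) (i : ℕ) :
    (del m σ).toFun i =
      if 1 ≤ i ∧ i ≤ m then rel (σ.toFun 1).natAbs (σ.toFun (i + 1)) else 0 := rfl

lemma del_ins (m s : ℕ) (h1 : 1 ≤ s) (h2 : s ≤ m + 1) (τ : SignedPerm m) :
    del m (ins m s h1 h2 τ) = τ := by
  apply SignedPerm.ext'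
  intro i
  have hs1 : ((ins m s h1 h2 τ).toFun 1).natAbs = s := by
    rw [ins_toFun, if_pos rfl]; omega
  rw [del_toFun, hs1]
  split_ifs with h
  · rw [ins_toFun, if_neg (by omega), if_pos (by omega), Nat.add_sub_cancel, rel_urel]
  · exact (τ.eq_zero i (by simp only [Finset.mem_Icc]; omega)).symm

lemma ins_del (m s : ℕ) (h1 : 1 ≤ s) (h2 : s ≤ m + 1) (σ : SignedPerm (m + 1))
    (hσ : σ.toFun 1 = -(s:ℤ)) : ins m s h1 h2 (del m σ) = σ := by
  apply SignedPerm.ext'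
  intro i
  have hs : (σ.toFun 1).natAbs = s := by omega
  rw [ins_toFun]
  split_ifs with e1 e2
  · rw [e1, hσ]
  · rw [del_toFun, if_pos (by omega : 1 ≤ i - 1 ∧ i - 1 ≤ m), hs,
      (by omega : i - 1 + 1 = i), urel_rel s h1]
    intro hc
    have := σ.inj_abs i (by simp only [Finset.mem_Icc]; omega)
      1 (by simp only [Finset.mem_Icc]; omega) (by omega)
    omega
  · exact (σ.eq_zero i (by simp only [Finset.mem_Icc]; omega)).symm

lemma word_ins (k s : ℕ) (h1 : 1 ≤ s) (h2 : s ≤ k + 2) (τ : SignedPerm (k + 1))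
    (i : ℕ) (hik : i ≤ k + 2) :
    word (ins (k+1) s h1 h2 τ) i = if i = 1 then -(s:ℤ) else
      if 2 ≤ i ∧ i ≤ k + 2 then urel s (τ.toFun (i - 1)) else 0 := by
  rw [word, if_pos (by omega : i ≤ k + 1 + 1)]
  rfl

lemma ins_last_pos (k s : ℕ) (h1 : 1 ≤ s) (h2 : s ≤ k + 2) (τ : SignedPerm (k + 1)) :
    (0 < (ins (k+1) s h1 h2 τ).toFun (k+2)) ↔ 0 < τ.toFun (k+1) := by
  rw [ins_toFun, if_neg (by omega), if_pos (by omega)]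
  have : k + 2 - 1 = k + 1 := by omega
  rw [this, urel_pos s h1]

lemma desB_ins (k s : ℕ) (h1 : 1 ≤ s) (h2 : s ≤ k + 2) (τ : SignedPerm (k + 1)) :
    desB (ins (k+1) s h1 h2 τ)
      = desB τ + (if 0 < τ.toFun 1 ∨ τ.toFun 1 ≤ -(s:ℤ) then 1 else 0) := by
  have hτ1 := τ.mem_abs 1 (by simp only [Finset.mem_Icc]; omega)
  simp only [Finset.mem_Icc] at hτ1
  set σ' := ins (k+1) s h1 h2 τ with hσ'
  have hw0 : word σ' 0 = 0 := by
    rw [hσ', word_ins k s h1 h2 τ 0 (by omega), if_neg (by omega), if_neg (by omega)]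
  have hw1 : word σ' 1 = -(s:ℤ) := by
    rw [hσ', word_ins k s h1 h2 τ 1 (by omega), if_pos rfl]
  have hI : ∀ i, 2 ≤ i → i ≤ k + 2 → word σ' i = urel s (τ.toFun (i - 1)) := by
    intro i hi2 hik
    rw [hσ', word_ins k s h1 h2 τ i hik, if_neg (by omega), if_pos ⟨hi2, hik⟩]
  have hwt : ∀ i, i ≤ k + 1 → word τ i = τ.toFun i := by
    intro i hi; rw [word, if_pos hi]
  have hwt0 : word τ 0 = 0 := by
    rw [hwt 0 (by omega), τ.eq_zero 0 (by simp)]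
  rw [desB, desB, Finset.card_filter, Finset.card_filter]
  simp only [Finset.sum_range_succ', Nat.zero_add, Nat.reduceAdd]
  have hint : ∀ i ∈ Finset.range k,
      (if word σ' (i+1+1+1) < word σ' (i+1+1) then 1 else 0)
        = (if word τ (i+1+1) < word τ (i+1) then 1 else 0) := by
    intro i hi
    simp only [Finset.mem_range] at hi
    rw [hI (i+1+1+1) (by omega) (by omega), hI (i+1+1) (by omega) (by omega),
      hwt (i+1+1) (by omega), hwt (i+1) (by omega)]
    simp only [Nat.add_sub_cancel]
    simp only [urel_lt_urel]
  rw [Finset.sum_congr rfl hint]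
  have hb2 : word σ' 2 = urel s (τ.toFun 1) := by
    rw [hI 2 (by omega) (by omega)]
  rw [hw0, hw1, hb2, hwt 1 (by omega), hwt0]
  have hiff := urel_lt_neg s h1 (τ.toFun 1)
  split_ifs <;> omega

/-! ### the bijection -/

lemma step1 (k s : ℕ) (r : ℤ) (h1 : 1 ≤ s) (h2 : s ≤ k + 2) :
    BP (k+2) (-(s:ℤ)) r
      = Nat.card {τ : SignedPerm (k+1) //
          (0 < τ.toFun (k+1) ∧ 0 < τ.toFun 1 ∧ (desB τ : ℤ) = r - 1) ∨
          (0 < τ.toFun (k+1) ∧ τ.toFun 1 ≤ -(s:ℤ) ∧ (desB τ : ℤ) = r - 1) ∨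
          (0 < τ.toFun (k+1) ∧ (-(s:ℤ) < τ.toFun 1 ∧ τ.toFun 1 < 0) ∧
            (desB τ : ℤ) = r)} := by
  apply Nat.card_congr
  refine
    { toFun := fun σ => ⟨del (k+1) σ.1, ?_⟩
      invFun := fun τ => ⟨ins (k+1) s h1 h2 τ.1, ?_⟩
      left_inv := ?_
      right_inv := ?_ }
  · obtain ⟨hpos, hfirst, hdes⟩ := σ.2
    have hins : ins (k+1) s h1 h2 (del (k+1) σ.1) = σ.1 :=
      ins_del (k+1) s h1 h2 σ.1 hfirst
    have hd := desB_ins k s h1 h2 (del (k+1) σ.1)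
    rw [hins] at hd
    have hlast : 0 < (del (k+1) σ.1).toFun (k+1) := by
      rw [← ins_last_pos k s h1 h2 (del (k+1) σ.1), hins]; exact hpos
    have hne0 : (del (k+1) σ.1).toFun 1 ≠ 0 := by
      have := (del (k+1) σ.1).mem_abs 1 (by simp only [Finset.mem_Icc]; omega)
      simp only [Finset.mem_Icc] at this
      omega
    by_cases hc : 0 < (del (k+1) σ.1).toFun 1 ∨ (del (k+1) σ.1).toFun 1 ≤ -(s:ℤ)
    · rw [if_pos hc] at hd
      rcases hc with hc | hc
      · exact Or.inl ⟨hlast, hc, by omega⟩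
      · exact Or.inr (Or.inl ⟨hlast, hc, by omega⟩)
    · rw [if_neg hc] at hd
      push_neg at hc
      exact Or.inr (Or.inr ⟨hlast, ⟨hc.2, by omega⟩, by omega⟩)
  · have hone : (ins (k+1) s h1 h2 τ.1).toFun 1 = -(s:ℤ) := by
      rw [ins_toFun, if_pos rfl]
    have hd := desB_ins k s h1 h2 τ.1
    rcases τ.2 with ⟨hl, hf, hdes⟩ | ⟨hl, hf, hdes⟩ | ⟨hl, hf, hdes⟩
    · refine ⟨(ins_last_pos k s h1 h2 τ.1).mpr hl, hone, ?_⟩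
      rw [if_pos (Or.inl hf)] at hd
      omega
    · refine ⟨(ins_last_pos k s h1 h2 τ.1).mpr hl, hone, ?_⟩
      rw [if_pos (Or.inr hf)] at hd
      omega
    · refine ⟨(ins_last_pos k s h1 h2 τ.1).mpr hl, hone, ?_⟩
      rw [if_neg (by omega)] at hd
      omega
  · intro σ
    exact Subtype.ext (ins_del (k+1) s h1 h2 σ.1 σ.2.2.1)
  · intro τ
    exact Subtype.ext (del_ins (k+1) s h1 h2 τ.1)

/-! ### counting -/

lemma card_split {α : Type*} [Finite α] (p q : α → Prop)
    (h : ∀ x, p x → q x → False) :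
    Nat.card {x // p x ∨ q x} = Nat.card {x // p x} + Nat.card {x // q x} := by
  classical
  have := Fintype.ofFinite α
  simp only [Nat.card_eq_fintype_card, Fintype.card_subtype]
  rw [Finset.filter_or, Finset.card_union_of_disjoint]
  rw [Finset.disjoint_left]
  intro a ha hb
  simp only [Finset.mem_filter] at ha hb
  exact h a ha.2 hb.2

lemma card_fiber {α : Type*} [Finite α] (p : α → Prop) (f : α → ℤ) (t : Finset ℤ)
    (h : ∀ x, p x → f x ∈ t) :
    Nat.card {x // p x} = ∑ v ∈ t, Nat.card {x // p x ∧ f x = v} := by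
  classical
  have := Fintype.ofFinite α
  simp only [Nat.card_eq_fintype_card, Fintype.card_subtype]
  rw [Finset.card_eq_sum_card_fiberwise
    (fun x hx => h x (Finset.mem_filter.mp hx).2) (f := f)]
  exact Finset.sum_congr rfl fun v _ => by rw [Finset.filter_filter]

lemma piece1 (m : ℕ) (c : ℤ) (hm : 1 ≤ m) :
    Nat.card {x : SignedPerm m // 0 < x.toFun m ∧ 0 < x.toFun 1 ∧ (desB x : ℤ) = c}
      = ∑ j ∈ Finset.Icc 1 m, BP m (j : ℤ) c := by
  rw [card_fiber _ (fun x => x.toFun 1) ((Finset.Icc 1 m).image (fun j : ℕ => (j:ℤ)))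
    (by
      intro x hx
      have hab := x.mem_abs 1 (by simp only [Finset.mem_Icc]; omega)
      simp only [Finset.mem_Icc] at hab
      simp only [Finset.mem_image, Finset.mem_Icc]
      exact ⟨(x.toFun 1).toNat, by omega, by omega⟩)]
  rw [Finset.sum_image (by intro x _ y _ h; beta_reduce at h; exact_mod_cast h)]
  refine Finset.sum_congr rfl fun j hj => ?_
  simp only [Finset.mem_Icc] at hj
  refine Nat.card_congr (Equiv.subtypeEquivRight fun x => ?_)
  constructor
  · rintro ⟨⟨ha, hb, hd⟩, he⟩; exact ⟨ha, he, hd⟩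
  · rintro ⟨ha, he, hd⟩; exact ⟨⟨ha, by omega, hd⟩, he⟩

lemma piece2 (m s : ℕ) (c : ℤ) (hm : 1 ≤ m) (hs : 1 ≤ s) :
    Nat.card {x : SignedPerm m //
        0 < x.toFun m ∧ x.toFun 1 ≤ -(s:ℤ) ∧ (desB x : ℤ) = c}
      = ∑ j ∈ Finset.Icc s m, BP m (-(j : ℤ)) c := by
  rw [card_fiber _ (fun x => x.toFun 1)
    ((Finset.Icc s m).image (fun j : ℕ => -(j:ℤ)))
    (by
      intro x hx
      have hab := x.mem_abs 1 (by simp only [Finset.mem_Icc]; omega)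
      simp only [Finset.mem_Icc] at hab
      simp only [Finset.mem_image, Finset.mem_Icc]
      exact ⟨(x.toFun 1).natAbs, by omega, by omega⟩)]
  rw [Finset.sum_image (by intro x _ y _ h; beta_reduce at h; omega)]
  refine Finset.sum_congr rfl fun j hj => ?_
  simp only [Finset.mem_Icc] at hj
  refine Nat.card_congr (Equiv.subtypeEquivRight fun x => ?_)
  constructor
  · rintro ⟨⟨ha, hb, hd⟩, he⟩; exact ⟨ha, he, hd⟩
  · rintro ⟨ha, he, hd⟩; exact ⟨⟨ha, by omega, hd⟩, he⟩

lemma piece3 (m s : ℕ) (c : ℤ) :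
    Nat.card {x : SignedPerm m //
        0 < x.toFun m ∧ (-(s:ℤ) < x.toFun 1 ∧ x.toFun 1 < 0) ∧ (desB x : ℤ) = c}
      = ∑ j ∈ Finset.Icc 1 (s - 1), BP m (-(j : ℤ)) c := by
  rw [card_fiber _ (fun x => x.toFun 1)
    ((Finset.Icc 1 (s-1)).image (fun j : ℕ => -(j:ℤ)))
    (by
      intro x hx
      simp only [Finset.mem_image, Finset.mem_Icc]
      obtain ⟨-, ⟨hb1, hb2⟩, -⟩ := hx
      exact ⟨(x.toFun 1).natAbs, by omega, by omega⟩)]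
  rw [Finset.sum_image (by intro x _ y _ h; beta_reduce at h; omega)]
  refine Finset.sum_congr rfl fun j hj => ?_
  simp only [Finset.mem_Icc] at hj
  refine Nat.card_congr (Equiv.subtypeEquivRight fun x => ?_)
  constructor
  · rintro ⟨⟨ha, hb, hd⟩, he⟩; exact ⟨ha, he, hd⟩
  · rintro ⟨ha, he, hd⟩; exact ⟨⟨ha, by omega, hd⟩, he⟩


/-- Recurrence for `B^+(n,-s,r)`. -/
theorem stmt3 (n s r : ℕ) (hn : 2 ≤ n) (hs1 : 1 ≤ s) (hsn : s ≤ n) (hr : r ≤ n - 1) :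
    BP n (-(s : ℤ)) (r : ℤ) =
      (∑ j ∈ Finset.Icc 1 (n - 1), BP (n - 1) (j : ℤ) ((r : ℤ) - 1)) +
      (∑ j ∈ Finset.Icc s (n - 1), BP (n - 1) (-(j : ℤ)) ((r : ℤ) - 1)) +
      (∑ j ∈ Finset.Icc 1 (s - 1), BP (n - 1) (-(j : ℤ)) (r : ℤ)) := by
  obtain ⟨k, rfl⟩ : ∃ k, n = k + 2 := ⟨n - 2, by omega⟩
  rw [show k + 2 - 1 = k + 1 from rfl]
  calc BP (k+2) (-(s:ℤ)) (r:ℤ)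
      = Nat.card {τ : SignedPerm (k+1) //
          (0 < τ.toFun (k+1) ∧ 0 < τ.toFun 1 ∧ (desB τ : ℤ) = (r:ℤ) - 1) ∨
          (0 < τ.toFun (k+1) ∧ τ.toFun 1 ≤ -(s:ℤ) ∧ (desB τ : ℤ) = (r:ℤ) - 1) ∨
          (0 < τ.toFun (k+1) ∧ (-(s:ℤ) < τ.toFun 1 ∧ τ.toFun 1 < 0) ∧
            (desB τ : ℤ) = (r:ℤ))} := step1 k s (r:ℤ) hs1 hsn
    _ = Nat.card {τ : SignedPerm (k+1) //
          0 < τ.toFun (k+1) ∧ 0 < τ.toFun 1 ∧ (desB τ : ℤ) = (r:ℤ) - 1}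
        + Nat.card {τ : SignedPerm (k+1) //
          (0 < τ.toFun (k+1) ∧ τ.toFun 1 ≤ -(s:ℤ) ∧ (desB τ : ℤ) = (r:ℤ) - 1) ∨
          (0 < τ.toFun (k+1) ∧ (-(s:ℤ) < τ.toFun 1 ∧ τ.toFun 1 < 0) ∧
            (desB τ : ℤ) = (r:ℤ))} :=
        card_split _ _ (by rintro x ⟨-, hb, -⟩ (⟨-, hb', -⟩ | ⟨-, ⟨-, hb'⟩, -⟩) <;> omega)
    _ = Nat.card {τ : SignedPerm (k+1) //
          0 < τ.toFun (k+1) ∧ 0 < τ.toFun 1 ∧ (desB τ : ℤ) = (r:ℤ) - 1}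
        + (Nat.card {τ : SignedPerm (k+1) //
            0 < τ.toFun (k+1) ∧ τ.toFun 1 ≤ -(s:ℤ) ∧ (desB τ : ℤ) = (r:ℤ) - 1}
          + Nat.card {τ : SignedPerm (k+1) //
            0 < τ.toFun (k+1) ∧ (-(s:ℤ) < τ.toFun 1 ∧ τ.toFun 1 < 0) ∧
              (desB τ : ℤ) = (r:ℤ)}) := by
        rw [card_split _ _ (by rintro x ⟨-, hb, -⟩ ⟨-, ⟨hb', -⟩, -⟩; omega)]
    _ = (∑ j ∈ Finset.Icc 1 (k+1), BP (k+1) (j : ℤ) ((r:ℤ) - 1)) +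
        ((∑ j ∈ Finset.Icc s (k+1), BP (k+1) (-(j : ℤ)) ((r:ℤ) - 1)) +
         (∑ j ∈ Finset.Icc 1 (s-1), BP (k+1) (-(j : ℤ)) (r:ℤ))) := by
        rw [piece1 (k+1) ((r:ℤ)-1) (by omega), piece2 (k+1) s ((r:ℤ)-1) (by omega) hs1,
          piece3 (k+1) s (r:ℤ)]
    _ = _ := by ring
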